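/- (Reabsorbing lower order norms into the Hölder seminorm modulo polynomials.) Let n ≥ 1, k ∈ ℕ with k ≥ 1, and let γ = m + θ with m ∈ ℕ, θ ∈ (0,1) and m ≤ k − 1. Then there exists a constant C > 0, depending only on n, γ and k, such that for every f : B_1 → ℝ which is m times continuously differentiable with ‖f‖_{C^γ(B_1)} < ∞, one has inf_P ( sup_{B_1} |f − P| + [f − P]_{C^γ(B_1)} ) ≤ C · inf_P [f − P]_{C^γ(B_1)}, where both infima are taken over all polynomials P of degree at most k−1. -/

import Mathlib

open MeasureTheory Metric Set Filter
open scoped ENNReal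

noncomputable section

/-- Euclidean space `ℝⁿ`. -/
abbrev En (n : ℕ) := EuclideanSpace ℝ (Fin n)

/-- The principal value fractional Laplacian `(-Δ)ˢ v` exists at `x` and equals `L`:
all the truncated integrals are defined and they converge to `L` as the truncation
parameter tends to `0⁺`. -/
def PVFracLapAt (n : ℕ) (s : ℝ) (v : En n → ℝ) (x : En n) (L : ℝ) : Prop :=
  (∀ ε : ℝ, 0 < ε →
    IntegrableOn (fun y => (v x - v y) / ‖x - y‖ ^ ((n : ℝ) + 2 * s)) {y | ε < ‖x - y‖}) ∧
  Tendsto (fun ε : ℝ =>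
      ∫ y in {y : En n | ε < ‖x - y‖}, (v x - v y) / ‖x - y‖ ^ ((n : ℝ) + 2 * s))
    (nhdsWithin 0 (Ioi 0)) (nhds L)

/-- `P : ℝⁿ → ℝ` is a polynomial function of total degree at most `k - 1`
(with the convention that for `k = 0` it is identically zero). -/
def IsPolyDegLt (n k : ℕ) (P : En n → ℝ) : Prop :=
  ∃ p : MvPolynomial (Fin n) ℝ,
    (∀ m ∈ p.support, (m.sum fun _ e => e) < k) ∧
    ∀ x : En n, P x = MvPolynomial.eval (fun i => x i) p

/-- `(-Δ)ˢ u ≐ᵏ f` pointwise in the unit ball `B₁`. -/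
def FracLapEqModPoly (n : ℕ) (s : ℝ) (k : ℕ) (u f : En n → ℝ) : Prop :=
  ∃ F P : ℝ → En n → ℝ,
    (∀ R : ℝ, 1 ≤ R →
      ContinuousOn (F R) (ball (0 : En n) 1) ∧ IsPolyDegLt n k (P R) ∧
      ∀ x ∈ ball (0 : En n) 1,
        PVFracLapAt n s ((ball (0 : En n) R).indicator u) x (F R x + P R x)) ∧
    ∀ x ∈ ball (0 : En n) 1, Tendsto (fun R => F R x) atTop (nhds (f x))

/-- The tail quantity `J_{u,j} = ∫_{B_{1/2}ᶜ} |u(y)| / |y|^{n+2s+j} dy`, valued in `[0,∞]`. -/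
def Jtail (n : ℕ) (s : ℝ) (j : ℕ) (u : En n → ℝ) : ℝ≥0∞ :=
  ∫⁻ y in (ball (0 : En n) (1 / 2))ᶜ,
    ENNReal.ofReal (|u y| / ‖y‖ ^ ((n : ℝ) + 2 * s + (j : ℝ)))

/-- The Hölder seminorm `[f]_{C^γ(Ω)}`, valued in `[0,∞]`. -/
def holderSemi (n : ℕ) (γ : ℝ) (Ω : Set (En n)) (f : En n → ℝ) : ℝ≥0∞ :=
  ⨆ (x ∈ Ω) (y ∈ Ω) (_ : x ≠ y),
    ENNReal.ofReal
      (‖iteratedFDerivWithin ℝ ⌊γ⌋₊ f Ω x - iteratedFDerivWithin ℝ ⌊γ⌋₊ f Ω y‖ /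
        ‖x - y‖ ^ (γ - (⌊γ⌋₊ : ℝ)))

/-- The norm `‖f‖_{C^m(Ω)}`, valued in `[0,∞]`. -/
def cNorm (n : ℕ) (m : ℕ) (Ω : Set (En n)) (f : En n → ℝ) : ℝ≥0∞ :=
  ∑ j ∈ Finset.range (m + 1),
    ⨆ x ∈ Ω, ENNReal.ofReal ‖iteratedFDerivWithin ℝ j f Ω x‖

/-- The norm `‖f‖_{C^γ(Ω)} = ‖f‖_{C^{⌊γ⌋}(Ω)} + [f]_{C^γ(Ω)}`, valued in `[0,∞]`. -/
def cHolderNorm (n : ℕ) (γ : ℝ) (Ω : Set (En n)) (f : En n → ℝ) : ℝ≥0∞ :=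
  cNorm n ⌊γ⌋₊ Ω f + holderSemi n γ Ω f

/-- The seminorm `[f]_{C^γ(Ω;k)}`: the infimum of `[f - P]_{C^γ(Ω)}` over all
polynomials `P` of degree at most `k - 1`. -/
def holderSemiMod (n : ℕ) (γ : ℝ) (Ω : Set (En n)) (k : ℕ) (f : En n → ℝ) : ℝ≥0∞ :=
  ⨅ (P : En n → ℝ) (_ : IsPolyDegLt n k P), holderSemi n γ Ω (fun x => f x - P x)

set_option maxHeartbeats 1000000

section Aux

variable {n : ℕ}

lemma contDiff_evalFun (N : ℕ) (p : MvPolynomial (Fin n) ℝ) :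
    ContDiff ℝ N (fun x : En n => MvPolynomial.eval (fun i => x i) p) := by
  induction p using MvPolynomial.induction_on with
  | C a => simpa using contDiff_const
  | add p q hp hq =>
      simp only [map_add]
      exact hp.add hq
  | mul_X p i hp =>
      simp only [map_mul, MvPolynomial.eval_X]
      exact hp.mul (EuclideanSpace.proj (𝕜 := ℝ) i).contDiff

lemma IsPolyDegLt.contDiff {k : ℕ} {P : En n → ℝ} (hP : IsPolyDegLt n k P) (N : ℕ) :
    ContDiff ℝ N P := by
  obtain ⟨p, -, hp⟩ := hP
  have : P = fun x : En n => MvPolynomial.eval (fun i => x i) p := funext hp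
  rw [this]
  exact contDiff_evalFun N p

lemma IsPolyDegLt.mono {k k' : ℕ} (hkk' : k ≤ k') {P : En n → ℝ} (h : IsPolyDegLt n k P) :
    IsPolyDegLt n k' P := by
  obtain ⟨p, hs, he⟩ := h
  exact ⟨p, fun m hm => lt_of_lt_of_le (hs m hm) hkk', he⟩

lemma IsPolyDegLt.add {k : ℕ} {P Q : En n → ℝ} (hP : IsPolyDegLt n k P)
    (hQ : IsPolyDegLt n k Q) : IsPolyDegLt n k (fun x => P x + Q x) := by
  obtain ⟨p, hps, hpe⟩ := hP
  obtain ⟨q, hqs, hqe⟩ := hQ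
  refine ⟨p + q, fun m hm => ?_, fun x => by simp [hpe x, hqe x]⟩
  rcases Finset.mem_union.mp (MvPolynomial.support_add hm) with h | h
  · exact hps m h
  · exact hqs m h

lemma isPolyDegLt_zero (k : ℕ) : IsPolyDegLt n k (fun _ => (0:ℝ)) :=
  ⟨0, by simp, by simp⟩

lemma isPolyDegLt_sum {ι : Type*} {k : ℕ} (s : Finset ι) (P : ι → En n → ℝ)
    (h : ∀ i ∈ s, IsPolyDegLt n k (P i)) :
    IsPolyDegLt n k (fun x => ∑ i ∈ s, P i x) := by
  classical
  induction s using Finset.induction_on with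
  | empty => simpa using isPolyDegLt_zero k
  | insert a s hni ih =>
      simp only [Finset.sum_insert hni]
      exact (h a (Finset.mem_insert_self a s)).add
        (ih fun i hi => h i (Finset.mem_insert_of_mem hi))

lemma isPolyDegLt_diag (j : ℕ) (B : ContinuousMultilinearMap ℝ (fun _ : Fin j => En n) ℝ) :
    IsPolyDegLt n (j + 1) (fun x => B (fun _ => x)) := by
  classical
  refine ⟨∑ d ∈ (Finset.univ : Finset (Fin j → Fin n)),
      MvPolynomial.C (B (fun l => EuclideanSpace.single (d l) 1)) *
        ∏ l : Fin j, MvPolynomial.X (d l), fun mo hmo => ?_, fun x => ?_⟩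
  · have h1 : (∑ d ∈ (Finset.univ : Finset (Fin j → Fin n)),
        MvPolynomial.C (B (fun l => EuclideanSpace.single (d l) 1)) *
          ∏ l : Fin j, MvPolynomial.X (d l)).totalDegree ≤ j := by
      refine (MvPolynomial.totalDegree_finset_sum _ _).trans (Finset.sup_le fun d _ => ?_)
      refine (MvPolynomial.totalDegree_mul _ _).trans ?_
      rw [MvPolynomial.totalDegree_C, zero_add]
      refine (MvPolynomial.totalDegree_finset_prod _ _).trans ?_
      calc (∑ l : Fin j, (MvPolynomial.X (d l) : MvPolynomial (Fin n) ℝ).totalDegree)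
          ≤ ∑ _l : Fin j, 1 := Finset.sum_le_sum fun l _ => le_of_eq (MvPolynomial.totalDegree_X _)
        _ = j := by simp
    exact lt_of_le_of_lt ((MvPolynomial.le_totalDegree hmo).trans h1) (Nat.lt_succ_self j)
  · have hxeq : x = ∑ i : Fin n, x i • EuclideanSpace.single i (1:ℝ) := by
      ext i0
      rw [WithLp.ofLp_sum, Finset.sum_apply]
      simp [EuclideanSpace.single_apply]
    calc B (fun _ => x)
        = B (fun _ => ∑ i : Fin n, x i • EuclideanSpace.single i (1:ℝ)) := by rw [← hxeq]
      _ = ∑ d : Fin j → Fin n, B (fun l => x (d l) • EuclideanSpace.single (d l) (1:ℝ)) :=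
          B.map_sum (fun _ i => x i • EuclideanSpace.single i (1:ℝ))
      _ = ∑ d : Fin j → Fin n,
            (∏ l : Fin j, x (d l)) • B (fun l => EuclideanSpace.single (d l) (1:ℝ)) := by
          refine Finset.sum_congr rfl fun d _ => ?_
          exact B.map_smul_univ (fun l => x (d l)) (fun l => EuclideanSpace.single (d l) (1:ℝ))
      _ = MvPolynomial.eval (fun i => x i) (∑ d ∈ (Finset.univ : Finset (Fin j → Fin n)),
            MvPolynomial.C (B (fun l => EuclideanSpace.single (d l) 1)) *
              ∏ l : Fin j, MvPolynomial.X (d l)) := by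
          rw [map_sum]
          refine Finset.sum_congr rfl fun d _ => ?_
          rw [map_mul, MvPolynomial.eval_C, map_prod]
          simp only [MvPolynomial.eval_X, smul_eq_mul]
          rw [mul_comm]

universe u v

lemma iter_zero {E : Type u} [NormedAddCommGroup E] [NormedSpace ℝ E] :
    ∀ (N : ℕ) {F : Type (max u v)} [NormedAddCommGroup F] [NormedSpace ℝ F]
      (f : E → F) (p : FormalMultilinearSeries ℝ E F),
      HasFiniteFPowerSeriesOnBall f p 0 N ⊤ → ∀ x, iteratedFDeriv ℝ N f x = 0 := by
  intro N
  induction N with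
  | zero =>
      intro F _ _ f p hf x
      have hx : f x = 0 := hf.eq_zero_of_bound_zero x (by simp)
      ext v
      simp [hx]
  | succ N ih =>
      intro F _ _ f p hf x
      have hfd : HasFiniteFPowerSeriesOnBall (fderiv ℝ f) p.derivSeries 0 N ⊤ := by
        simpa using hf.fderiv'
      have h0 := ih (fderiv ℝ f) p.derivSeries hfd x
      have hnorm : ‖iteratedFDeriv ℝ (N + 1) f x‖ = 0 := by
        rw [← norm_iteratedFDeriv_fderiv, h0, norm_zero]
      exact norm_eq_zero.mp hnorm

lemma norm_le_diag {F : Type*} [NormedAddCommGroup F] [NormedSpace ℝ F] {j : ℕ}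
    (B : ContinuousMultilinearMap ℝ (fun _ : Fin j => ℝ) F) : ‖B‖ ≤ ‖B (fun _ => 1)‖ := by
  refine B.opNorm_le_bound (norm_nonneg _) fun v => ?_
  have hveq : (fun l => v l • (1:ℝ)) = v := funext fun l => by simp
  calc ‖B v‖ = ‖B (fun l => v l • (1:ℝ))‖ := by rw [hveq]
    _ = ‖(∏ l, v l) • B (fun _ => (1:ℝ))‖ := by rw [B.map_smul_univ]
    _ = (∏ l, |v l|) * ‖B (fun _ => (1:ℝ))‖ := by
        rw [norm_smul, Real.norm_eq_abs, Finset.abs_prod]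
    _ ≤ ‖B (fun _ => (1:ℝ))‖ * ∏ l, ‖v l‖ := by
        rw [mul_comm]
        simp [Real.norm_eq_abs]

section Key

variable {n : ℕ}

lemma key (m : ℕ) (θ : ℝ) (hθ0 : 0 < θ) (A : ℝ) (hA : 0 ≤ A)
    (g : En n → ℝ) (hg : ContDiffOn ℝ m g (ball (0 : En n) 1))
    (hH : ∀ z ∈ ball (0 : En n) 1, ∀ w ∈ ball (0 : En n) 1,
      ‖iteratedFDerivWithin ℝ m g (ball (0 : En n) 1) z -
        iteratedFDerivWithin ℝ m g (ball (0 : En n) 1) w‖ ≤ A * ‖z - w‖ ^ θ) :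
    ∃ T : En n → ℝ, IsPolyDegLt n (m + 1) T ∧
      (∀ z ∈ ball (0 : En n) 1, ∀ w ∈ ball (0 : En n) 1,
        iteratedFDerivWithin ℝ m T (ball (0 : En n) 1) z =
          iteratedFDerivWithin ℝ m T (ball (0 : En n) 1) w) ∧
      (∀ x ∈ ball (0 : En n) 1, |g x - T x| ≤ A) := by
  set Ω : Set (En n) := ball (0 : En n) 1 with hΩdef
  have hΩo : IsOpen Ω := isOpen_ball
  have hΩu : UniqueDiffOn ℝ Ω := hΩo.uniqueDiffOn
  have h0Ω : (0 : En n) ∈ Ω := mem_ball_self one_pos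
  set q : FormalMultilinearSeries ℝ (En n) ℝ :=
    fun j => if h : j ≤ m then ((Nat.factorial j : ℝ))⁻¹ • iteratedFDerivWithin ℝ j g Ω 0 else 0 with hqdef
  set T : En n → ℝ := fun x => ∑ j ∈ Finset.range (m + 1), q j (fun _ => x) with hTdef
  have hTpoly : IsPolyDegLt n (m + 1) T := by
    refine isPolyDegLt_sum _ _ fun j hj => ?_
    have hj' : j + 1 ≤ m + 1 := Finset.mem_range.mp hj
    exact (isPolyDegLt_diag j (q j)).mono hj'
  have hq : HasFiniteFPowerSeriesOnBall T q 0 (m + 1) ⊤ :=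
    HasFiniteFPowerSeriesOnBall.mk'
      (fun j hj => by simp only [hqdef]; rw [dif_neg (by omega)])
      ENNReal.zero_lt_top (fun y _ => by rw [zero_add])
  have hTsmooth : ∀ N : ℕ, ContDiff ℝ N T := fun N => hTpoly.contDiff N
  have hhigh : ∀ x, iteratedFDeriv ℝ (m + 1) T x = 0 := iter_zero (m + 1) T q hq
  have hTconstG : ∀ x y : En n, iteratedFDeriv ℝ m T x = iteratedFDeriv ℝ m T y := by
    intro x y
    have hdiff : ∀ z ∈ (univ : Set (En n)), DifferentiableAt ℝ (iteratedFDeriv ℝ m T) z := by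
      intro z _
      exact (ContDiff.differentiable_iteratedFDeriv
        (by exact_mod_cast Nat.lt_succ_self m) (hTsmooth (m + 1))).differentiableAt
    have hbd : ∀ z ∈ (univ : Set (En n)), ‖fderiv ℝ (iteratedFDeriv ℝ m T) z‖ ≤ 0 := by
      intro z _
      rw [← fderivWithin_univ, ← iteratedFDerivWithin_univ,
        norm_fderivWithin_iteratedFDerivWithin, iteratedFDerivWithin_univ, hhigh z, norm_zero]
    have h0 := convex_univ.norm_image_sub_le_of_norm_fderiv_le hdiff hbd (mem_univ y) (mem_univ x)
    rw [zero_mul] at h0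
    exact sub_eq_zero.mp (norm_le_zero_iff.mp h0)
  have hTconst : ∀ z ∈ Ω, ∀ w ∈ Ω,
      iteratedFDerivWithin ℝ m T Ω z = iteratedFDerivWithin ℝ m T Ω w := by
    intro z hz w hw
    rw [iteratedFDerivWithin_of_isOpen m hΩo hz, iteratedFDerivWithin_of_isOpen m hΩo hw]
    exact hTconstG z w
  set D : En n → ℝ := fun z => g z + -T z with hDdef
  have hDsmooth : ContDiffOn ℝ m D Ω := hg.add (((hTsmooth m).neg).contDiffOn)
  have hsplit : ∀ j : ℕ, j ≤ m → ∀ z ∈ Ω,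
      iteratedFDerivWithin ℝ j D Ω z
        = iteratedFDerivWithin ℝ j g Ω z - iteratedFDerivWithin ℝ j T Ω z := by
    intro j hj z hz
    rw [hDdef]
    rw [iteratedFDerivWithin_add_apply' (hg.of_le (by exact_mod_cast hj) z hz)
      (((hTsmooth j).neg).contDiffOn z hz) hΩu hz]
    have hneg : (fun z : En n => -T z) = -T := rfl
    rw [hneg, iteratedFDerivWithin_neg_apply hΩu hz, sub_eq_add_neg]
  have hdiag0 : ∀ j : ℕ, j ≤ m → ∀ y : En n,
      iteratedFDerivWithin ℝ j D Ω 0 (fun _ => y) = 0 := by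
    intro j hj y
    rw [hsplit j hj 0 h0Ω, ContinuousMultilinearMap.sub_apply]
    have h1 : iteratedFDerivWithin ℝ j T Ω 0 = iteratedFDeriv ℝ j T 0 :=
      iteratedFDerivWithin_of_isOpen j hΩo h0Ω
    have h2 := hq.toHasFPowerSeriesOnBall.factorial_smul y j
    rw [h1, ← h2]
    simp only [hqdef]
    rw [dif_pos hj]
    have hfac : ((Nat.factorial j : ℝ)) ≠ 0 := Nat.cast_ne_zero.mpr (Nat.factorial_ne_zero j)
    simp only [ContinuousMultilinearMap.smul_apply, nsmul_eq_mul, smul_eq_mul]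
    rw [← mul_assoc, mul_inv_cancel₀ hfac, one_mul, sub_self]
  refine ⟨T, hTpoly, hTconst, ?_⟩
  intro x hxΩ
  have hxnorm : ‖x‖ < 1 := mem_ball_zero_iff.mp hxΩ
  set L : ℝ →L[ℝ] En n := (ContinuousLinearMap.id ℝ ℝ).smulRight x with hLdef
  have hL : ∀ t : ℝ, L t = t • x := fun t => rfl
  set U : Set ℝ := ⇑L ⁻¹' Ω with hUdef
  have hUo : IsOpen U := hΩo.preimage L.continuous
  have hUu : UniqueDiffOn ℝ U := hUo.uniqueDiffOn
  have hIccU : Icc (0:ℝ) 1 ⊆ U := by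
    intro t ht
    have h1 : |t| ≤ 1 := abs_le.mpr ⟨by linarith [ht.1], ht.2⟩
    have : ‖t • x‖ < 1 := by
      rw [norm_smul, Real.norm_eq_abs]
      nlinarith [abs_nonneg t, norm_nonneg x]
    simp only [hUdef, mem_preimage, hL]
    exact mem_ball_zero_iff.mpr this
  have h0U : (0:ℝ) ∈ U := hIccU ⟨le_refl 0, zero_le_one⟩
  set R : ℝ → ℝ := D ∘ ⇑L with hRdef
  have hRsmooth : ContDiffOn ℝ m R U := hDsmooth.comp_continuousLinearMap L
  have hcomp : ∀ i : ℕ, i ≤ m → ∀ t ∈ U,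
      iteratedFDerivWithin ℝ i R U t =
        (iteratedFDerivWithin ℝ i D Ω (L t)).compContinuousLinearMap (fun _ => L) :=
    fun i hi t ht =>
      L.iteratedFDerivWithin_comp_right hDsmooth hΩu hUu ht (by exact_mod_cast hi)
  have hdiagval : ∀ i : ℕ, i ≤ m → ∀ t ∈ U,
      (iteratedFDerivWithin ℝ i R U t) (fun _ => (1:ℝ))
        = (iteratedFDerivWithin ℝ i D Ω (L t)) (fun _ => x) := by
    intro i hi t ht
    rw [hcomp i hi t ht, ContinuousMultilinearMap.compContinuousLinearMap_apply]
    congr 1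
    funext l
    rw [hL, one_smul]
  have hmain : ∀ i : ℕ, i ≤ m → ∀ t ∈ Icc (0:ℝ) 1,
      ‖iteratedFDerivWithin ℝ (m - i) R U t‖ ≤ A := by
    intro i
    induction i with
    | zero =>
        intro _ t ht
        have htU : t ∈ U := hIccU ht
        have htΩ : L t ∈ Ω := htU
        rw [Nat.sub_zero]
        refine (norm_le_diag _).trans ?_
        rw [hdiagval m le_rfl t htU]
        have hval : (iteratedFDerivWithin ℝ m D Ω (L t)) (fun _ => x)
            = (iteratedFDerivWithin ℝ m g Ω (L t) - iteratedFDerivWithin ℝ m g Ω 0)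
                (fun _ => x) := by
          rw [hsplit m le_rfl (L t) htΩ]
          have hT0 : iteratedFDerivWithin ℝ m T Ω (L t) = iteratedFDerivWithin ℝ m T Ω 0 :=
            hTconst (L t) htΩ 0 h0Ω
          rw [hT0]
          have hz := hdiag0 m le_rfl x
          rw [hsplit m le_rfl 0 h0Ω, ContinuousMultilinearMap.sub_apply] at hz
          simp only [ContinuousMultilinearMap.sub_apply]
          linarith [hz]
        rw [hval]
        have hLtnorm : ‖L t‖ < 1 := mem_ball_zero_iff.mp htΩ
        calc ‖(iteratedFDerivWithin ℝ m g Ω (L t) - iteratedFDerivWithin ℝ m g Ω 0)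
              (fun _ => x)‖
            ≤ ‖iteratedFDerivWithin ℝ m g Ω (L t) - iteratedFDerivWithin ℝ m g Ω 0‖ *
                ∏ _l : Fin m, ‖x‖ :=
              (iteratedFDerivWithin ℝ m g Ω (L t) - iteratedFDerivWithin ℝ m g Ω 0).le_opNorm _
          _ ≤ (A * ‖L t - 0‖ ^ θ) * 1 := by
              have hp : (∏ _l : Fin m, ‖x‖) = ‖x‖ ^ m := by
                simp [Finset.prod_const, Finset.card_univ]
              rw [hp]
              have hx1 : ‖x‖ ^ m ≤ 1 := pow_le_one₀ (norm_nonneg x) hxnorm.le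
              have hnn : (0:ℝ) ≤ A * ‖L t - 0‖ ^ θ := by positivity
              exact mul_le_mul (hH (L t) htΩ 0 h0Ω) hx1 (by positivity)
                (by positivity)
          _ ≤ A := by
              rw [mul_one, sub_zero]
              have : ‖L t‖ ^ θ ≤ 1 := Real.rpow_le_one (norm_nonneg _) hLtnorm.le hθ0.le
              nlinarith [Real.rpow_nonneg (norm_nonneg (L t)) θ]
    | succ i ih =>
        intro hsucc t ht
        have him : i ≤ m := by omega
        have hjm : (m - (i+1)) + 1 = m - i := by omega
        have hjlt : m - (i+1) < m := by omega
        set j : ℕ := m - (i + 1) with hjdef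
        set G : ℝ → ContinuousMultilinearMap ℝ (fun _ : Fin j => ℝ) ℝ :=
          iteratedFDerivWithin ℝ j R U with hGdef
        have hGdiffOn : DifferentiableOn ℝ G U :=
          hRsmooth.differentiableOn_iteratedFDerivWithin (by exact_mod_cast hjlt) hUu
        have hGdiffAt : ∀ s ∈ Icc (0:ℝ) 1, DifferentiableAt ℝ G s := fun s hs =>
          (hGdiffOn s (hIccU hs)).differentiableAt (hUo.mem_nhds (hIccU hs))
        have hGbound : ∀ s ∈ Icc (0:ℝ) 1, ‖fderivWithin ℝ G (Icc (0:ℝ) 1) s‖ ≤ A := by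
          intro s hs
          rw [fderivWithin_eq_fderiv ((uniqueDiffOn_Icc zero_lt_one) s hs) (hGdiffAt s hs)]
          rw [← fderivWithin_of_isOpen hUo (hIccU hs)]
          rw [hGdef, norm_fderivWithin_iteratedFDerivWithin, hjm]
          exact ih him s hs
        have hG0 : ‖G 0‖ ≤ 0 := by
          refine (norm_le_diag _).trans ?_
          rw [hGdef, hdiagval j (by omega) 0 h0U]
          have hL0 : L (0:ℝ) = 0 := by rw [hL, zero_smul]
          rw [hL0, hdiag0 j (by omega) x, norm_zero]
        have hMVT := (convex_Icc (0:ℝ) 1).norm_image_sub_le_of_norm_fderivWithin_le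
          (hGdiffOn.mono hIccU) hGbound (left_mem_Icc.mpr zero_le_one) ht
        have habs : ‖(t:ℝ) - 0‖ ≤ 1 := by
          rw [sub_zero, Real.norm_eq_abs]
          exact abs_le.mpr ⟨by linarith [ht.1], ht.2⟩
        calc ‖iteratedFDerivWithin ℝ (m - (i+1)) R U t‖ = ‖G t‖ := rfl
          _ = ‖(G t - G 0) + G 0‖ := by rw [sub_add_cancel]
          _ ≤ ‖G t - G 0‖ + ‖G 0‖ := norm_add_le _ _
          _ ≤ A * ‖(t:ℝ) - 0‖ + 0 := add_le_add hMVT hG0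
          _ ≤ A := by
              rw [add_zero]
              nlinarith [norm_nonneg ((t:ℝ) - 0)]
  have hfinal := hmain m le_rfl 1 (right_mem_Icc.mpr zero_le_one)
  rw [Nat.sub_self, norm_iteratedFDerivWithin_zero] at hfinal
  have hR1 : R 1 = g x - T x := by
    rw [hRdef]
    simp only [Function.comp_apply]
    rw [hL, one_smul, hDdef, sub_eq_add_neg]
  rwa [hR1, Real.norm_eq_abs] at hfinal

end Key

/-- Reabsorbing lower order norms into the Hölder seminorm
modulo polynomials. -/
theorem reabsorb_lower_order
    (n : ℕ) (hn : 1 ≤ n) (k : ℕ) (hk : 1 ≤ k) (m : ℕ) (θ : ℝ)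
    (hθ : θ ∈ Ioo (0 : ℝ) 1) (hmk : m ≤ k - 1) :
    ∃ C : ℝ, 0 < C ∧
      ∀ f : En n → ℝ,
        ContDiffOn ℝ m f (ball (0 : En n) 1) →
        cHolderNorm n ((m : ℝ) + θ) (ball (0 : En n) 1) f < ⊤ →
        (⨅ (P : En n → ℝ) (_ : IsPolyDegLt n k P),
            ((⨆ x ∈ ball (0 : En n) 1, ENNReal.ofReal |f x - P x|) +
              holderSemi n ((m : ℝ) + θ) (ball (0 : En n) 1) (fun x => f x - P x))) ≤
          ENNReal.ofReal C *
            ⨅ (P : En n → ℝ) (_ : IsPolyDegLt n k P),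
              holderSemi n ((m : ℝ) + θ) (ball (0 : En n) 1) (fun x => f x - P x) := by
  obtain ⟨hθ0, hθ1⟩ := hθ
  refine ⟨2, two_pos, ?_⟩
  intro f hf hfin
  set Ω : Set (En n) := ball (0 : En n) 1 with hΩdef
  have hΩo : IsOpen Ω := isOpen_ball
  have hΩu : UniqueDiffOn ℝ Ω := hΩo.uniqueDiffOn
  have hfloor : ⌊(m : ℝ) + θ⌋₊ = m := by
    rw [Nat.floor_eq_iff (by positivity)]
    constructor
    · linarith
    · push_cast; linarith
  have hfM : ContDiffOn ℝ (⌊(m:ℝ) + θ⌋₊ : ℕ) f Ω := by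
    rw [hfloor]; exact hf
  have hsemi_eq : ∀ u : En n → ℝ, holderSemi n ((m:ℝ) + θ) Ω u =
      ⨆ (x ∈ Ω) (y ∈ Ω) (_ : x ≠ y),
        ENNReal.ofReal
          (‖iteratedFDerivWithin ℝ ⌊(m:ℝ) + θ⌋₊ u Ω x -
              iteratedFDerivWithin ℝ ⌊(m:ℝ) + θ⌋₊ u Ω y‖ /
            ‖x - y‖ ^ θ) := by
    intro u
    simp only [holderSemi]
    rw [show ((m:ℝ) + θ) - (⌊(m:ℝ) + θ⌋₊ : ℝ) = θ by rw [hfloor]; ring]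
  have main : ∀ P : En n → ℝ, IsPolyDegLt n k P →
      (⨅ (Q : En n → ℝ) (_ : IsPolyDegLt n k Q),
        ((⨆ x ∈ Ω, ENNReal.ofReal |f x - Q x|) +
          holderSemi n ((m:ℝ) + θ) Ω (fun x => f x - Q x)))
      ≤ 2 * holderSemi n ((m:ℝ) + θ) Ω (fun x => f x - P x) := by
    intro P hP
    set S := holderSemi n ((m:ℝ) + θ) Ω (fun x => f x - P x) with hSdef
    by_cases hStop : S = ⊤
    · rw [hStop, ENNReal.mul_top (by norm_num)]
      exact le_top
    set A := S.toReal with hAdef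
    have hA : 0 ≤ A := ENNReal.toReal_nonneg
    set g : En n → ℝ := fun x => f x - P x with hgdef
    have hgsm : ContDiffOn ℝ (⌊(m:ℝ) + θ⌋₊ : ℕ) g Ω := hfM.sub ((hP.contDiff _).contDiffOn)
    have hH : ∀ z ∈ Ω, ∀ w ∈ Ω,
        ‖iteratedFDerivWithin ℝ ⌊(m:ℝ) + θ⌋₊ g Ω z - iteratedFDerivWithin ℝ ⌊(m:ℝ) + θ⌋₊ g Ω w‖
          ≤ A * ‖z - w‖ ^ θ := by
      intro z hz w hw
      rcases eq_or_ne z w with rfl | hzw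
      · simp only [sub_self, norm_zero]
        positivity
      · have hterm : ENNReal.ofReal
            (‖iteratedFDerivWithin ℝ ⌊(m:ℝ) + θ⌋₊ g Ω z - iteratedFDerivWithin ℝ ⌊(m:ℝ) + θ⌋₊ g Ω w‖ /
              ‖z - w‖ ^ θ) ≤ S := by
          rw [hSdef, hsemi_eq]
          exact le_iSup₂_of_le z hz (le_iSup₂_of_le w hw (le_iSup_of_le hzw le_rfl))
        have hle := (ENNReal.ofReal_le_iff_le_toReal hStop).mp hterm
        have hpos : (0:ℝ) < ‖z - w‖ ^ θ :=
          Real.rpow_pos_of_pos (by rwa [norm_pos_iff, sub_ne_zero]) θ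
        calc ‖iteratedFDerivWithin ℝ ⌊(m:ℝ) + θ⌋₊ g Ω z - iteratedFDerivWithin ℝ ⌊(m:ℝ) + θ⌋₊ g Ω w‖
            = (‖iteratedFDerivWithin ℝ ⌊(m:ℝ) + θ⌋₊ g Ω z - iteratedFDerivWithin ℝ ⌊(m:ℝ) + θ⌋₊ g Ω w‖ /
                ‖z - w‖ ^ θ) * ‖z - w‖ ^ θ := (div_mul_cancel₀ _ hpos.ne').symm
          _ ≤ A * ‖z - w‖ ^ θ := mul_le_mul_of_nonneg_right hle hpos.le
    obtain ⟨T, hTpoly, hTconst, hTbound⟩ := key ⌊(m:ℝ) + θ⌋₊ θ hθ0 A hA g hgsm hH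
    set Q : En n → ℝ := fun x => P x + T x with hQdef
    have hQpoly : IsPolyDegLt n k Q := by
      refine hP.add (hTpoly.mono ?_)
      rw [hfloor]; omega
    have hstep1 : (⨅ (Q' : En n → ℝ) (_ : IsPolyDegLt n k Q'),
        ((⨆ x ∈ Ω, ENNReal.ofReal |f x - Q' x|) +
          holderSemi n ((m:ℝ) + θ) Ω (fun x => f x - Q' x)))
        ≤ (⨆ x ∈ Ω, ENNReal.ofReal |f x - Q x|) +
            holderSemi n ((m:ℝ) + θ) Ω (fun x => f x - Q x) :=
      iInf₂_le Q hQpoly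
    have hsup : (⨆ x ∈ Ω, ENNReal.ofReal |f x - Q x|) ≤ S := by
      refine iSup₂_le fun x hx => ?_
      have hxb : |f x - Q x| ≤ A := by
        have h1 := hTbound x hx
        have heq : f x - Q x = g x - T x := by rw [hQdef, hgdef]; ring
        rwa [heq]
      calc ENNReal.ofReal |f x - Q x| ≤ ENNReal.ofReal A := ENNReal.ofReal_le_ofReal hxb
        _ = S := ENNReal.ofReal_toReal hStop
    have hsub : ∀ z ∈ Ω, iteratedFDerivWithin ℝ ⌊(m:ℝ) + θ⌋₊ (fun x => f x - Q x) Ω z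
        = iteratedFDerivWithin ℝ ⌊(m:ℝ) + θ⌋₊ g Ω z - iteratedFDerivWithin ℝ ⌊(m:ℝ) + θ⌋₊ T Ω z := by
      intro z hz
      have hfun : (fun x => f x - Q x) = fun x => g x + -T x := by
        funext y
        rw [hQdef, hgdef]
        ring
      rw [hfun, iteratedFDerivWithin_add_apply' (hgsm z hz) (((hTpoly.contDiff _).neg).contDiffOn z hz)
        hΩu hz]
      have hneg : (fun y : En n => -T y) = -T := rfl
      rw [hneg, iteratedFDerivWithin_neg_apply hΩu hz, sub_eq_add_neg]
    have hsemiQ : holderSemi n ((m:ℝ) + θ) Ω (fun x => f x - Q x) = S := by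
      rw [hSdef, hsemi_eq, hsemi_eq]
      refine iSup_congr fun x => iSup_congr fun hx => iSup_congr fun y =>
        iSup_congr fun hy => iSup_congr fun hxy => ?_
      rw [hsub x hx, hsub y hy, hTconst x hx y hy, sub_sub_sub_cancel_right]
    calc (⨅ (Q' : En n → ℝ) (_ : IsPolyDegLt n k Q'),
        ((⨆ x ∈ Ω, ENNReal.ofReal |f x - Q' x|) +
          holderSemi n ((m:ℝ) + θ) Ω (fun x => f x - Q' x)))
        ≤ (⨆ x ∈ Ω, ENNReal.ofReal |f x - Q x|) +
            holderSemi n ((m:ℝ) + θ) Ω (fun x => f x - Q x) := hstep1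
      _ ≤ S + S := add_le_add hsup (le_of_eq hsemiQ)
      _ = 2 * S := (two_mul S).symm
  have h2 : ENNReal.ofReal (2:ℝ) = 2 := by
    norm_num
  rw [h2]
  set a := (⨅ (P : En n → ℝ) (_ : IsPolyDegLt n k P),
      ((⨆ x ∈ Ω, ENNReal.ofReal |f x - P x|) +
        holderSemi n ((m:ℝ) + θ) Ω (fun x => f x - P x))) with hadef
  have hdiv : a / 2 ≤ ⨅ (P : En n → ℝ) (_ : IsPolyDegLt n k P),
      holderSemi n ((m:ℝ) + θ) Ω (fun x => f x - P x) := by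
    refine le_iInf₂ fun P hP => ?_
    rw [ENNReal.div_le_iff_le_mul (Or.inl (by norm_num)) (Or.inl (by norm_num))]
    rw [mul_comm]
    exact main P hP
  calc a = 2 * (a / 2) := (ENNReal.mul_div_cancel' (by norm_num) (by norm_num)).symm
    _ ≤ 2 * ⨅ (P : En n → ℝ) (_ : IsPolyDegLt n k P),
          holderSemi n ((m:ℝ) + θ) Ω (fun x => f x - P x) := mul_le_mul_right hdiv 2
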